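/- Let μ be a nonzero finite positive Radon Borel measure on K, and let a, b ≥ 0. Say that Φ*μ = 0 if ∫ Φf dμ = 0 for every Lipschitz f : M → ℝ with f(0) = 0. Then: (i) if a·μ ≼ b·μ and Φ*μ ≠ 0, then a = b; (ii) Φ*μ = 0 if and only if 0 ≼ μ (i.e. ∫ g dμ ≥ 0 for every g ∈ G); (iii) if Φ*μ = 0, then a·μ ≼ b·μ if and only if a ≤ b. -/

import Mathlib

open MeasureTheory

/-- `Wt M` is the set `W = {(x,y) ∈ M × M : x ≠ y}`, a topological subspace of `M × M`. -/
abbrev Wt (M : Type*) [MetricSpace M] := {p : M × M // p.1 ≠ p.2}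

/-- `g : W → ℝ` satisfies the G-inequality. -/
def GIneq {M : Type*} [MetricSpace M] (g : Wt M → ℝ) : Prop :=
  ∀ (x u y : M) (hxu : x ≠ u) (huy : u ≠ y) (hxy : x ≠ y),
    dist x y * g ⟨(x, y), hxy⟩ ≤ dist x u * g ⟨(x, u), hxu⟩ + dist u y * g ⟨(u, y), huy⟩

/-- The cone `G` of continuous functions on `K = βW` satisfying the G-inequality
on points of `W`. -/
def GSet (M : Type*) [MetricSpace M] : Set (StoneCech (Wt M) → ℝ) :=
  {g | Continuous g ∧ GIneq fun p => g (stoneCechUnit p)}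

/-- The Choquet-like quasi-order `μ ≼ ν`. -/
def Preceq {M : Type*} [MetricSpace M] [MeasurableSpace (StoneCech (Wt M))]
    (μ ν : Measure (StoneCech (Wt M))) : Prop :=
  ∀ g ∈ GSet M, ∫ ζ, g ζ ∂μ ≤ ∫ ζ, g ζ ∂ν

/-- `μ` is `≼`-minimal among finite positive Radon Borel measures. -/
def IsMinimal {M : Type*} [MetricSpace M] [MeasurableSpace (StoneCech (Wt M))]
    (μ : Measure (StoneCech (Wt M))) : Prop :=
  ∀ ν : Measure (StoneCech (Wt M)),
    IsFiniteMeasure ν → ν.InnerRegular → Preceq ν μ → Preceq μ ν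

/-- `Φ*μ = 0`: the De Leeuw transform of `μ` annihilates every base-point-normalised
Lipschitz function. -/
def PhiStarZero {M : Type*} [MetricSpace M] [MeasurableSpace (StoneCech (Wt M))]
    (basept : M) (μ : Measure (StoneCech (Wt M))) : Prop :=
  ∀ f : M → ℝ, (∃ C : NNReal, LipschitzWith C f) → f basept = 0 →
    ∀ F : StoneCech (Wt M) → ℝ, Continuous F →
      (∀ p : Wt M, F (stoneCechUnit p) = (f p.1.1 - f p.1.2) / dist p.1.1 p.1.2) →
      ∫ ζ, F ζ ∂μ = 0

/-- Any continuous real function on a compact Hausdorff Borel space is integrable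
with respect to a finite measure. -/
lemma aux_integrable {K : Type*} [TopologicalSpace K] [CompactSpace K] [T2Space K]
    [MeasurableSpace K] [BorelSpace K] (μ : Measure K) [IsFiniteMeasure μ]
    (g : K → ℝ) (hg : Continuous g) : Integrable g μ :=
  hg.integrable_of_hasCompactSupport (HasCompactSupport.of_compactSpace g)

lemma aux_smul_integral {K : Type*} [MeasurableSpace K] (μ : Measure K) (a : NNReal)
    (f : K → ℝ) : ∫ x, f x ∂((a : NNReal) • μ) = (a : ℝ) * ∫ x, f x ∂μ := by
  rw [show (a : NNReal) • μ = (a : ENNReal) • μ from rfl, integral_smul_measure]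
  simp

lemma aux_third {M : Type*} [MetricSpace M] (h3 : ∃ x y z : M, x ≠ y ∧ x ≠ z ∧ y ≠ z)
    (x y : M) : ∃ z : M, z ≠ x ∧ z ≠ y := by
  by_contra hc
  push_neg at hc
  obtain ⟨p, q, r, hpq, hpr, hqr⟩ := h3
  have hp := hc p; have hq := hc q; have hr := hc r
  by_cases h1 : p = x <;> by_cases h2 : q = x <;> by_cases h3' : r = x <;> simp_all

/-- For `g` satisfying the G-inequality (in a space with ≥ 3 points),
`g(x,y) + g(y,x) ≥ 0`. -/
lemma aux_sum_nonneg {M : Type*} [MetricSpace M]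
    (h3 : ∃ x y z : M, x ≠ y ∧ x ≠ z ∧ y ≠ z) (g : Wt M → ℝ) (hg : GIneq g)
    (x y : M) (hxy : x ≠ y) : 0 ≤ g ⟨(x, y), hxy⟩ + g ⟨(y, x), hxy.symm⟩ := by
  obtain ⟨z, hzx, hzy⟩ := aux_third h3 x y
  have h1 := hg x y z hxy (Ne.symm hzy) (Ne.symm hzx)
  have h2 := hg y x z hxy.symm (Ne.symm hzx) (Ne.symm hzy)
  have hd : 0 < dist x y := dist_pos.2 hxy
  have hcomm : dist y x = dist x y := dist_comm y x
  rw [hcomm] at h2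
  have hsum : 0 ≤ dist x y * (g ⟨(x, y), hxy⟩ + g ⟨(y, x), hxy.symm⟩) := by
    rw [mul_add]; linarith
  by_contra hneg
  push_neg at hneg
  have : dist x y * (g ⟨(x, y), hxy⟩ + g ⟨(y, x), hxy.symm⟩) < 0 :=
    mul_neg_of_pos_of_neg hd hneg
  linarith

/-- The De Leeuw transform of a Lipschitz function satisfies the G-inequality
(indeed with equality). -/
lemma aux_deLeeuw_GIneq {M : Type*} [MetricSpace M] (f : M → ℝ)
    (F : StoneCech (Wt M) → ℝ)
    (hFeq : ∀ p : Wt M, F (stoneCechUnit p) = (f p.1.1 - f p.1.2) / dist p.1.1 p.1.2) :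
    GIneq (fun p => F (stoneCechUnit p)) := by
  intro x u y hxu huy hxy
  simp only [hFeq]
  rw [mul_div_cancel₀ _ (dist_ne_zero.2 hxy), mul_div_cancel₀ _ (dist_ne_zero.2 hxu),
    mul_div_cancel₀ _ (dist_ne_zero.2 huy)]
  linarith

lemma aux_neg_deLeeuw_GIneq {M : Type*} [MetricSpace M] (f : M → ℝ)
    (F : StoneCech (Wt M) → ℝ)
    (hFeq : ∀ p : Wt M, F (stoneCechUnit p) = (f p.1.1 - f p.1.2) / dist p.1.1 p.1.2) :
    GIneq (fun p => (-F) (stoneCechUnit p)) := by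
  intro x u y hxu huy hxy
  simp only [Pi.neg_apply, hFeq, mul_neg]
  rw [mul_div_cancel₀ _ (dist_ne_zero.2 hxy), mul_div_cancel₀ _ (dist_ne_zero.2 hxu),
    mul_div_cancel₀ _ (dist_ne_zero.2 huy)]
  linarith

/-- Main lemma: if `Φ*μ = 0` then `∫ g dμ ≥ 0` for every `g ∈ G`. -/
lemma aux_main {M : Type*} [MetricSpace M]
    [MeasurableSpace (StoneCech (Wt M))] [BorelSpace (StoneCech (Wt M))]
    (basept : M) (h3 : ∃ x y z : M, x ≠ y ∧ x ≠ z ∧ y ≠ z)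
    (μ : Measure (StoneCech (Wt M))) [IsFiniteMeasure μ]
    (hΦ : PhiStarZero basept μ) (g : StoneCech (Wt M) → ℝ) (hg : g ∈ GSet M) :
    0 ≤ ∫ ζ, g ζ ∂μ := by
  classical
  obtain ⟨hgc, hgi⟩ := hg
  -- nonemptiness
  obtain ⟨x₀, y₀, z₀, hx₀y₀, -, -⟩ := id h3
  haveI : Nonempty (Wt M) := ⟨⟨(x₀, y₀), hx₀y₀⟩⟩
  haveI : Nonempty (StoneCech (Wt M)) := ⟨stoneCechUnit Classical.ofNonempty⟩
  -- bound on g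
  obtain ⟨ζ₀, -, hζ₀⟩ := isCompact_univ.exists_isMaxOn Set.univ_nonempty
    (hgc.abs.continuousOn)
  set C : ℝ := |g ζ₀| with hCdef
  have hC0 : 0 ≤ C := abs_nonneg _
  have hC : ∀ ζ, |g ζ| ≤ C := fun ζ => hζ₀ (Set.mem_univ ζ)
  -- the Lipschitz function
  set f : M → ℝ := fun z =>
    if h : z = basept then 0 else dist z basept * g (stoneCechUnit ⟨(z, basept), h⟩)
    with hfdef
  have hf0 : f basept = 0 := by simp [hfdef]
  -- key inequality
  have hkey : ∀ (x y : M) (hxy : x ≠ y),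
      f x - f y ≤ dist x y * g (stoneCechUnit ⟨(x, y), hxy⟩) := by
    intro x y hxy
    by_cases hyb : y = basept
    · rcases hyb
      simp only [hfdef, dif_pos rfl, dif_neg hxy, sub_zero]
      exact le_of_eq rfl
    · by_cases hxb : x = basept
      · rcases hxb
        simp only [hfdef, dif_pos rfl, dif_neg hyb, zero_sub]
        have hsum := aux_sum_nonneg h3 (fun p => g (stoneCechUnit p)) hgi basept y hxy
        have hd : 0 ≤ dist basept y := dist_nonneg
        have hcomm : dist y basept = dist basept y := dist_comm y basept
        beta_reduce at hsum
        have hsum' : 0 ≤ g (stoneCechUnit ⟨(basept, y), hxy⟩) +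
            g (stoneCechUnit ⟨(y, basept), hyb⟩) := hsum
        rw [dist_comm y basept]
        nlinarith [mul_nonneg hd hsum']
      · have h1 := hgi x y basept hxy hyb hxb
        beta_reduce at h1
        simp only [hfdef, dif_neg hxb, dif_neg hyb]
        linarith
  -- Lipschitz
  have hlip : LipschitzWith C.toNNReal f := by
    apply LipschitzWith.of_dist_le_mul
    intro x y
    rcases eq_or_ne x y with rfl | hxy
    · simp
    · rw [Real.dist_eq, Real.coe_toNNReal C hC0]
      rw [abs_le]
      constructor
      · have h2 := hkey y x hxy.symm
        have hb := hC (stoneCechUnit ⟨(y, x), hxy.symm⟩)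
        have hd : 0 ≤ dist y x := dist_nonneg
        have hcomm : dist y x = dist x y := dist_comm y x
        nlinarith [abs_le.1 hb]
      · have h1 := hkey x y hxy
        have hb := hC (stoneCechUnit ⟨(x, y), hxy⟩)
        have hd : 0 ≤ dist x y := dist_nonneg
        nlinarith [abs_le.1 hb]
  have hfc : Continuous f := hlip.continuous
  -- the quotient function
  set φ : Wt M → ℝ := fun p => (f p.1.1 - f p.1.2) / dist p.1.1 p.1.2 with hφdef
  have hφle : ∀ p : Wt M, φ p ≤ g (stoneCechUnit p) := by
    rintro ⟨⟨x, y⟩, hxy⟩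
    have := hkey x y hxy
    have hd : 0 < dist x y := dist_pos.2 hxy
    rw [hφdef]
    exact (div_le_iff₀ hd).2 (by linarith [this])
  have hφmem : ∀ p : Wt M, φ p ∈ Set.Icc (-C) C := by
    rintro ⟨⟨x, y⟩, hxy⟩
    have hd : 0 < dist x y := dist_pos.2 hxy
    have h1 := hkey x y hxy
    have h2 := hkey y x hxy.symm
    have hb1 := abs_le.1 (hC (stoneCechUnit ⟨(x, y), hxy⟩))
    have hb2 := abs_le.1 (hC (stoneCechUnit ⟨(y, x), hxy.symm⟩))
    have hcomm : dist y x = dist x y := dist_comm y x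
    constructor
    · rw [hφdef, le_div_iff₀ hd]
      nlinarith
    · rw [hφdef, div_le_iff₀ hd]
      nlinarith
  have hφc : Continuous φ := by
    apply Continuous.div
    · exact ((hfc.comp (continuous_fst.comp continuous_subtype_val)).sub
        (hfc.comp (continuous_snd.comp continuous_subtype_val)))
    · exact Continuous.dist (continuous_fst.comp continuous_subtype_val)
        (continuous_snd.comp continuous_subtype_val)
    · exact fun p => dist_ne_zero.2 p.2
  -- extend to the compactification via a compact interval
  haveI : CompactSpace (Set.Icc (-C) C) := isCompact_iff_compactSpace.mp isCompact_Icc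
  set φ' : Wt M → Set.Icc (-C) C := fun p => ⟨φ p, hφmem p⟩ with hφ'def
  have hφ'c : Continuous φ' := hφc.subtype_mk _
  set F : StoneCech (Wt M) → ℝ := fun ζ => ((stoneCechExtend hφ'c) ζ : ℝ) with hFdef
  have hFc : Continuous F := continuous_subtype_val.comp (continuous_stoneCechExtend hφ'c)
  have hFeq : ∀ p : Wt M, F (stoneCechUnit p) = φ p := by
    intro p
    have h := congrFun (stoneCechExtend_extends hφ'c) p
    simp only [Function.comp_apply] at h
    rw [hFdef]
    exact congrArg Subtype.val h
  -- F ≤ g everywhere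
  have hFle : ∀ ζ, F ζ ≤ g ζ := by
    intro ζ
    refine denseRange_stoneCechUnit.induction_on ζ (isClosed_le hFc hgc) ?_
    intro p
    rw [hFeq p]
    exact hφle p
  -- PhiStarZero applies
  have hint : ∫ ζ, F ζ ∂μ = 0 :=
    hΦ f ⟨C.toNNReal, hlip⟩ hf0 F hFc (fun p => hFeq p)
  calc (0 : ℝ) = ∫ ζ, F ζ ∂μ := hint.symm
    _ ≤ ∫ ζ, g ζ ∂μ := integral_mono (aux_integrable μ F hFc) (aux_integrable μ g hgc) hFle

theorem stmt12 {M : Type*} [MetricSpace M]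
    [MeasurableSpace (StoneCech (Wt M))] [BorelSpace (StoneCech (Wt M))]
    (basept : M) (h3 : ∃ x y z : M, x ≠ y ∧ x ≠ z ∧ y ≠ z)
    (μ : Measure (StoneCech (Wt M))) [IsFiniteMeasure μ] [μ.InnerRegular]
    (hμ : μ ≠ 0) (a b : NNReal) :
    (Preceq (a • μ) (b • μ) → ¬ PhiStarZero basept μ → a = b) ∧
    (PhiStarZero basept μ ↔ Preceq 0 μ) ∧
    (PhiStarZero basept μ → (Preceq (a • μ) (b • μ) ↔ a ≤ b)) := by
  refine ⟨?_, ⟨?_, ?_⟩, ?_⟩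
  · -- (i)
    intro hab hnz
    rw [PhiStarZero] at hnz
    push_neg at hnz
    obtain ⟨f, hflip, hf0, F, hFc, hFeq, hFne⟩ := hnz
    have hFG : F ∈ GSet M := ⟨hFc, aux_deLeeuw_GIneq f F hFeq⟩
    have hnFG : (-F) ∈ GSet M := ⟨hFc.neg, aux_neg_deLeeuw_GIneq f F hFeq⟩
    have h1 := hab F hFG
    have h2 := hab (-F) hnFG
    rw [aux_smul_integral μ a F, aux_smul_integral μ b F] at h1
    simp only [Pi.neg_apply] at h2
    rw [aux_smul_integral μ a fun ζ => -F ζ, aux_smul_integral μ b fun ζ => -F ζ,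
      integral_neg] at h2
    have heq : (a : ℝ) * ∫ ζ, F ζ ∂μ = (b : ℝ) * ∫ ζ, F ζ ∂μ := by nlinarith
    have : (a : ℝ) = (b : ℝ) := mul_right_cancel₀ hFne heq
    exact_mod_cast this
  · -- (ii) →
    intro hΦ g hg
    rw [integral_zero_measure]
    exact aux_main basept h3 μ hΦ g hg
  · -- (ii) ←
    intro h0 f hflip hf0 F hFc hFeq
    have hFG : F ∈ GSet M := ⟨hFc, aux_deLeeuw_GIneq f F hFeq⟩
    have hnFG : (-F) ∈ GSet M := ⟨hFc.neg, aux_neg_deLeeuw_GIneq f F hFeq⟩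
    have h1 := h0 F hFG
    have h2 := h0 (-F) hnFG
    rw [integral_zero_measure] at h1
    rw [integral_zero_measure] at h2
    simp only [Pi.neg_apply] at h2
    rw [integral_neg] at h2
    linarith
  · -- (iii)
    intro hΦ
    constructor
    · intro hab
      have hone : (fun _ : StoneCech (Wt M) => (1 : ℝ)) ∈ GSet M := by
        refine ⟨continuous_const, ?_⟩
        intro x u y hxu huy hxy
        simp only [mul_one]
        exact dist_triangle x u y
      have h1 := hab _ hone
      rw [aux_smul_integral μ a, aux_smul_integral μ b, integral_const, smul_eq_mul,
        mul_one] at h1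
      have hm : 0 < (μ Set.univ).toReal := by
        refine ENNReal.toReal_pos ?_ (measure_ne_top μ Set.univ)
        simpa [Measure.measure_univ_eq_zero] using hμ
      have : (a : ℝ) ≤ (b : ℝ) := le_of_mul_le_mul_right
        (by exact h1) hm
      exact_mod_cast this
    · intro hab g hg
      rw [aux_smul_integral μ a, aux_smul_integral μ b]
      have hI : 0 ≤ ∫ ζ, g ζ ∂μ := aux_main basept h3 μ hΦ g hg
      have : (a : ℝ) ≤ (b : ℝ) := by exact_mod_cast hab
      nlinarith
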